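/- Let M be a finite MDP with alarm region and x_0 an initial state. Suppose nonnegative functions ρ_t : X × A → [0,1] for 0 ≤ t ≤ T−1 and ρ_T : X → [0,1] satisfy: (i) Σ_{a∈A} ρ_0(x,a) = 1 if x = x_0 and 0 otherwise; (ii) for every 1 ≤ t ≤ T−1 and x ∈ X, Σ_{a∈A} ρ_t(x,a) = Σ_{x̄∈X,a∈A} P(x|x̄,a)·ρ_{t−1}(x̄,a); and (iii) ρ_T(x) = Σ_{x̄∈X,a∈A} P(x|x̄,a)·ρ_{T−1}(x̄,a) for every x ∈ X. Define a Markov policy π by π_t(a|x) = ρ_t(x,a)/Σ_{ā∈A} ρ_t(x,ā) whenever the denominator is positive, and arbitrarily (e.g., uniform on A) otherwise. Then P^π(X_t = x, A_t = a) = ρ_t(x,a) for all 0 ≤ t ≤ T−1, x ∈ X, a ∈ A, and P^π(X_T = x) = ρ_T(x) for all x ∈ X. -/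

import Mathlib

/- Common framework: finite MDPs with alarm region, trajectories,
   history-dependent policies, trajectory laws, objectives. -/

attribute [local instance] Classical.propDecidable

noncomputable section

/-- A finite MDP with alarm region `Xa`, horizon `T ≥ 1`, transition pmf `P`,
running rewards `r` and terminal reward `rT`. -/
structure MDP (X A : Type) [Fintype X] [Fintype A] where
  T : ℕ
  hT : 1 ≤ T
  P : X → A → X → ℝ
  P_nonneg : ∀ x a x', 0 ≤ P x a x'
  P_sum : ∀ x a, ∑ x', P x a x' = 1
  r : Fin T → X → A → ℝ
  rT : X → ℝ
  Xa : Set X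

variable {X A : Type} [Fintype X] [Fintype A]

/-- A trajectory `(x₀,…,x_T, a₀,…,a_{T-1})`. -/
abbrev Traj (M : MDP X A) := (Fin (M.T + 1) → X) × (Fin M.T → A)

/-- A history-dependent randomized policy: at each time `t < T` it maps the
history `(x₀,…,x_t, a₀,…,a_{t-1})` to a pmf on actions. -/
structure HistPolicy (M : MDP X A) where
  π : (t : Fin M.T) → (Fin (t.val + 1) → X) → (Fin t.val → A) → A → ℝ
  nonneg : ∀ t xs as a, 0 ≤ π t xs as a
  sum_one : ∀ t xs as, ∑ a, π t xs as a = 1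

/-- A policy is Markov if at each time it depends only on the current state. -/
def IsMarkov {M : MDP X A} (p : HistPolicy M) : Prop :=
  ∀ (t : Fin M.T) (xs xs' : Fin (t.val + 1) → X) (as as' : Fin t.val → A),
    xs (Fin.last t.val) = xs' (Fin.last t.val) → p.π t xs as = p.π t xs' as'

/-- The state part of the history at time `t` determined by a trajectory. -/
def histStates {M : MDP X A} (τ : Traj M) (t : Fin M.T) : Fin (t.val + 1) → X :=
  fun i => τ.1 (Fin.castLE (by have := t.isLt; omega) i)

/-- The action part of the history at time `t` determined by a trajectory. -/
def histActs {M : MDP X A} (τ : Traj M) (t : Fin M.T) : Fin t.val → A :=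
  fun i => τ.2 (Fin.castLE (by have := t.isLt; omega) i)

/-- The probability mass of a trajectory under policy `p` with initial state `x0`. -/
def trajProb (M : MDP X A) (p : HistPolicy M) (x0 : X) (τ : Traj M) : ℝ :=
  (if τ.1 0 = x0 then (1 : ℝ) else 0) *
    ∏ t : Fin M.T,
      p.π t (histStates τ t) (histActs τ t) (τ.2 t) *
        M.P (τ.1 t.castSucc) (τ.2 t) (τ.1 t.succ)

/-- Probability of an event (a set of trajectories) under the trajectory law. -/
def probEvent (M : MDP X A) (p : HistPolicy M) (x0 : X) (E : Traj M → Prop) : ℝ :=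
  ∑ τ : Traj M, if E τ then trajProb M p x0 τ else 0

/-- The objective `J_M(π) = E[Σ_t r_t(X_t,A_t) + r_T(X_T)]`. -/
def J (M : MDP X A) (p : HistPolicy M) (x0 : X) : ℝ :=
  ∑ τ : Traj M, trajProb M p x0 τ *
    (∑ t : Fin M.T, M.r t (τ.1 t.castSucc) (τ.2 t) + M.rT (τ.1 (Fin.last M.T)))


/-- Occupation measure `ρ_t(x,a) = P^π(X_t = x, A_t = a)` for `0 ≤ t ≤ T-1`. -/
def occ (M : MDP X A) (p : HistPolicy M) (x0 : X) (t : Fin M.T) (x : X) (a : A) : ℝ :=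
  probEvent M p x0 (fun τ => τ.1 t.castSucc = x ∧ τ.2 t = a)

/-- Terminal occupation measure `ρ_T(x) = P^π(X_T = x)`. -/
def occT (M : MDP X A) (p : HistPolicy M) (x0 : X) (x : X) : ℝ :=
  probEvent M p x0 (fun τ => τ.1 (Fin.last M.T) = x)

/-! ### Auxiliary machinery -/

lemma sum_update_mul' {ι β : Type} [Fintype ι] [DecidableEq ι] [Fintype β] (i : ι) (G : (ι → β) → ℝ) :
    ∑ f : ι → β, ∑ v : β, G (Function.update f i v) = (Fintype.card β : ℝ) * ∑ f : ι → β, G f := by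
  have h1 : ∑ p : (ι → β) × β, G (Function.update p.1 i p.2) = ∑ p : (ι → β) × β, G p.1 := by
    apply Fintype.sum_bijective (fun p : (ι → β) × β => (Function.update p.1 i p.2, p.1 i))
    · apply Function.Involutive.bijective
      intro p
      simp [Function.update_idem]
    · intro p; rfl
  calc ∑ f : ι → β, ∑ v : β, G (Function.update f i v)
      = ∑ p : (ι → β) × β, G (Function.update p.1 i p.2) := by rw [Fintype.sum_prod_type]
    _ = ∑ p : (ι → β) × β, G p.1 := h1
    _ = ∑ f : ι → β, ∑ _v : β, G f := by rw [Fintype.sum_prod_type]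
    _ = (Fintype.card β : ℝ) * ∑ f : ι → β, G f := by
        simp [Finset.sum_const, nsmul_eq_mul, Finset.mul_sum]

/-- Sum out a state coordinate. -/
lemma sumX_aux (M : MDP X A) (i : Fin (M.T + 1)) (F : Traj M → ℝ) (h : Traj M → X → ℝ)
    (hF : ∀ (τ : Traj M) (v : X), F (Function.update τ.1 i v, τ.2) = F τ)
    (hh : ∀ (τ : Traj M) (v w : X), h (Function.update τ.1 i v, τ.2) w = h τ w) :
    (Fintype.card X : ℝ) * ∑ τ : Traj M, F τ * h τ (τ.1 i)
      = ∑ τ : Traj M, F τ * ∑ v : X, h τ v := by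
  have key : ∀ as : Fin M.T → A,
      (Fintype.card X : ℝ) * ∑ xs : Fin (M.T + 1) → X, F (xs, as) * h (xs, as) (xs i)
        = ∑ xs : Fin (M.T + 1) → X, F (xs, as) * ∑ v : X, h (xs, as) v := by
    intro as
    rw [← sum_update_mul' i (fun xs => F (xs, as) * h (xs, as) (xs i))]
    refine Finset.sum_congr rfl fun xs _ => ?_
    rw [Finset.mul_sum]
    refine Finset.sum_congr rfl fun v _ => ?_
    have h1 := hF (xs, as) v
    have h2 := hh (xs, as) v v
    simp only at h1 h2
    rw [Function.update_self] at *
    rw [h1, h2]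
  calc (Fintype.card X : ℝ) * ∑ τ : Traj M, F τ * h τ (τ.1 i)
      = (Fintype.card X : ℝ) * ∑ as, ∑ xs, F (xs, as) * h (xs, as) (xs i) := by
        rw [Fintype.sum_prod_type, Finset.sum_comm]
    _ = ∑ as, ((Fintype.card X : ℝ) * ∑ xs, F (xs, as) * h (xs, as) (xs i)) := by
        rw [Finset.mul_sum]
    _ = ∑ as, ∑ xs, F (xs, as) * ∑ v : X, h (xs, as) v := by
        exact Finset.sum_congr rfl fun as _ => key as
    _ = ∑ τ : Traj M, F τ * ∑ v : X, h τ v := by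
        rw [Fintype.sum_prod_type, Finset.sum_comm]

/-- Sum out an action coordinate. -/
lemma sumA_aux (M : MDP X A) (j : Fin M.T) (F : Traj M → ℝ) (h : Traj M → A → ℝ)
    (hF : ∀ (τ : Traj M) (b : A), F (τ.1, Function.update τ.2 j b) = F τ)
    (hh : ∀ (τ : Traj M) (b c : A), h (τ.1, Function.update τ.2 j b) c = h τ c) :
    (Fintype.card A : ℝ) * ∑ τ : Traj M, F τ * h τ (τ.2 j)
      = ∑ τ : Traj M, F τ * ∑ b : A, h τ b := by
  have key : ∀ xs : Fin (M.T + 1) → X,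
      (Fintype.card A : ℝ) * ∑ as : Fin M.T → A, F (xs, as) * h (xs, as) (as j)
        = ∑ as : Fin M.T → A, F (xs, as) * ∑ b : A, h (xs, as) b := by
    intro xs
    rw [← sum_update_mul' j (fun as => F (xs, as) * h (xs, as) (as j))]
    refine Finset.sum_congr rfl fun as _ => ?_
    rw [Finset.mul_sum]
    refine Finset.sum_congr rfl fun b _ => ?_
    have h1 := hF (xs, as) b
    have h2 := hh (xs, as) b b
    simp only at h1 h2
    rw [Function.update_self] at *
    rw [h1, h2]
  calc (Fintype.card A : ℝ) * ∑ τ : Traj M, F τ * h τ (τ.2 j)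
      = (Fintype.card A : ℝ) * ∑ xs, ∑ as, F (xs, as) * h (xs, as) (as j) := by
        rw [Fintype.sum_prod_type]
    _ = ∑ xs, ((Fintype.card A : ℝ) * ∑ as, F (xs, as) * h (xs, as) (as j)) := by
        rw [Finset.mul_sum]
    _ = ∑ xs, ∑ as, F (xs, as) * ∑ b : A, h (xs, as) b := by
        exact Finset.sum_congr rfl fun xs _ => key xs
    _ = ∑ τ : Traj M, F τ * ∑ b : A, h τ b := by
        rw [Fintype.sum_prod_type]

/-- Partial trajectory weight: initial indicator times the first `k` factors. -/
def Sphi (M : MDP X A) (p : HistPolicy M) (x0 : X) (k : ℕ) (τ : Traj M) : ℝ :=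
  (if τ.1 0 = x0 then (1 : ℝ) else 0) *
    ∏ t ∈ Finset.univ.filter (fun t : Fin M.T => t.val < k),
      p.π t (histStates τ t) (histActs τ t) (τ.2 t) *
        M.P (τ.1 t.castSucc) (τ.2 t) (τ.1 t.succ)

lemma Sphi_zero (M : MDP X A) (p : HistPolicy M) (x0 : X) (τ : Traj M) :
    Sphi M p x0 0 τ = if τ.1 0 = x0 then (1 : ℝ) else 0 := by
  simp [Sphi]

lemma Sphi_top (M : MDP X A) (p : HistPolicy M) (x0 : X) (τ : Traj M) :
    Sphi M p x0 M.T τ = trajProb M p x0 τ := by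
  unfold Sphi trajProb
  congr 1
  rw [Finset.filter_true_of_mem fun t _ => t.isLt]

lemma Sphi_succ (M : MDP X A) (p : HistPolicy M) (x0 : X) (k : ℕ) (hk : k < M.T) (τ : Traj M) :
    Sphi M p x0 (k + 1) τ = Sphi M p x0 k τ *
      (p.π ⟨k, hk⟩ (histStates τ ⟨k, hk⟩) (histActs τ ⟨k, hk⟩) (τ.2 ⟨k, hk⟩) *
        M.P (τ.1 (⟨k, hk⟩ : Fin M.T).castSucc) (τ.2 ⟨k, hk⟩) (τ.1 (⟨k, hk⟩ : Fin M.T).succ)) := by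
  unfold Sphi
  have hs : Finset.univ.filter (fun t : Fin M.T => t.val < k + 1)
      = insert (⟨k, hk⟩ : Fin M.T) (Finset.univ.filter (fun t : Fin M.T => t.val < k)) := by
    ext t
    simp only [Finset.mem_filter, Finset.mem_insert, Finset.mem_univ, true_and]
    constructor
    · intro ht
      rcases Nat.lt_succ_iff_lt_or_eq.mp ht with h | h
      · exact Or.inr h
      · exact Or.inl (Fin.ext h)
    · rintro (rfl | h)
      · exact Nat.lt_succ_self k
      · omega
  rw [hs, Finset.prod_insert (by
    simp only [Finset.mem_filter, Finset.mem_univ, true_and]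
    exact fun h => Nat.lt_irrefl k h)]
  ring

lemma histStates_update_state {M : MDP X A} (τ : Traj M) (t : Fin M.T) (i : Fin (M.T + 1))
    (hi : t.val < i.val) (v : X) :
    histStates ((Function.update τ.1 i v, τ.2) : Traj M) t = histStates τ t := by
  funext l
  show (Function.update τ.1 i v) _ = τ.1 _
  refine Function.update_of_ne (Fin.ne_of_val_ne ?_) v τ.1
  simp only [Fin.coe_castLE]
  have := l.isLt
  omega

lemma histActs_update_state {M : MDP X A} (τ : Traj M) (t : Fin M.T) (i : Fin (M.T + 1)) (v : X) :
    histActs ((Function.update τ.1 i v, τ.2) : Traj M) t = histActs τ t := rfl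

lemma histStates_update_act {M : MDP X A} (τ : Traj M) (t : Fin M.T) (j : Fin M.T) (b : A) :
    histStates ((τ.1, Function.update τ.2 j b) : Traj M) t = histStates τ t := rfl

lemma histActs_update_act {M : MDP X A} (τ : Traj M) (t : Fin M.T) (j : Fin M.T)
    (hj : t.val ≤ j.val) (b : A) :
    histActs ((τ.1, Function.update τ.2 j b) : Traj M) t = histActs τ t := by
  funext l
  show (Function.update τ.2 j b) _ = τ.2 _
  refine Function.update_of_ne (Fin.ne_of_val_ne ?_) b τ.2
  simp only [Fin.coe_castLE]
  have := l.isLt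
  omega

lemma Sphi_update_state (M : MDP X A) (p : HistPolicy M) (x0 : X) (k : ℕ) (i : Fin (M.T + 1))
    (hi : k < i.val) (τ : Traj M) (v : X) :
    Sphi M p x0 k (Function.update τ.1 i v, τ.2) = Sphi M p x0 k τ := by
  unfold Sphi
  dsimp only
  congr 1
  · simp only [Function.update_of_ne (show (0 : Fin (M.T + 1)) ≠ i from Fin.ne_of_val_ne (by simp only [Fin.val_zero]; omega)) v τ.1]
  · refine Finset.prod_congr rfl fun t ht => ?_
    have htk : t.val < k := (Finset.mem_filter.mp ht).2
    rw [histStates_update_state τ t i (by omega) v]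
    rw [show histActs ((Function.update τ.1 i v, τ.2) : Traj M) t = histActs τ t from rfl]
    rw [Function.update_of_ne (Fin.ne_of_val_ne (by
      simp only [Fin.coe_castSucc]; omega)) v τ.1]
    rw [Function.update_of_ne (Fin.ne_of_val_ne (by
      simp only [Fin.val_succ]; omega)) v τ.1]

lemma Sphi_update_act (M : MDP X A) (p : HistPolicy M) (x0 : X) (k : ℕ) (j : Fin M.T)
    (hj : k ≤ j.val) (τ : Traj M) (b : A) :
    Sphi M p x0 k (τ.1, Function.update τ.2 j b) = Sphi M p x0 k τ := by
  unfold Sphi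
  dsimp only
  congr 1
  refine Finset.prod_congr rfl fun t ht => ?_
  have htk : t.val < k := (Finset.mem_filter.mp ht).2
  rw [show histStates ((τ.1, Function.update τ.2 j b) : Traj M) t = histStates τ t from rfl]
  rw [histActs_update_act τ t j (by omega) b]
  rw [Function.update_of_ne (Fin.ne_of_val_ne (by omega)) b τ.2]
theorem occupation_realized_by_markov_policy [Nonempty X] [Nonempty A]
    (M : MDP X A) (x0 : X)
    (ρ : Fin M.T → X → A → ℝ) (ρT : X → ℝ)
    (hmem : ∀ (t : Fin M.T) (x : X) (a : A), ρ t x a ∈ Set.Icc (0 : ℝ) 1)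
    (hmemT : ∀ x : X, ρT x ∈ Set.Icc (0 : ℝ) 1)
    (h0 : ∀ x : X, ∑ a : A, ρ ⟨0, M.hT⟩ x a = if x = x0 then 1 else 0)
    (hflow : ∀ t : Fin M.T, 1 ≤ t.val → ∀ x : X,
      ∑ a : A, ρ t x a =
        ∑ x' : X, ∑ a : A,
          M.P x' a x * ρ ⟨t.val - 1, by have := t.isLt; omega⟩ x' a)
    (hfinal : ∀ x : X, ρT x =
      ∑ x' : X, ∑ a : A,
        M.P x' a x * ρ ⟨M.T - 1, by have := M.hT; omega⟩ x' a)
    (p : HistPolicy M) (hpM : IsMarkov p)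
    (hp : ∀ (t : Fin M.T) (xs : Fin (t.val + 1) → X) (as : Fin t.val → A) (a : A),
      0 < (∑ a' : A, ρ t (xs (Fin.last t.val)) a') →
      p.π t xs as a =
        ρ t (xs (Fin.last t.val)) a / ∑ a' : A, ρ t (xs (Fin.last t.val)) a') :
    (∀ (t : Fin M.T) (x : X) (a : A), occ M p x0 t x a = ρ t x a) ∧
    (∀ x : X, occT M p x0 x = ρT x) := by
  classical
  have cXpos : (0:ℝ) < (Fintype.card X : ℝ) := by exact_mod_cast Fintype.card_pos
  have cApos : (0:ℝ) < (Fintype.card A : ℝ) := by exact_mod_cast Fintype.card_pos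
  set cX : ℝ := (Fintype.card X : ℝ) with hcX_def
  set cA : ℝ := (Fintype.card A : ℝ) with hcA_def
  -- the Markov kernel extracted from the policy
  set q : (t : Fin M.T) → X → A → ℝ :=
    fun t y b => p.π t (fun _ => y) (fun _ => Classical.arbitrary A) b with hq_def
  have hq : ∀ (τ : Traj M) (t : Fin M.T),
      p.π t (histStates τ t) (histActs τ t) = q t (τ.1 t.castSucc) := by
    intro τ t
    rw [hq_def]
    apply hpM
    show histStates τ t (Fin.last t.val) = τ.1 t.castSucc
    rfl
  have hqsum : ∀ (t : Fin M.T) (y : X), ∑ b : A, q t y b = 1 := by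
    intro t y; rw [hq_def]; exact p.sum_one t _ _
  -- state marginals prescribed by ρ
  set σ : ℕ → X → ℝ := fun k y => if h : k < M.T then ∑ b : A, ρ ⟨k, h⟩ y b else ρT y
    with hσ_def
  have hσpos : ∀ (k : ℕ) (hk : k < M.T) (y : X), σ k y = ∑ b : A, ρ ⟨k, hk⟩ y b := by
    intro k hk y; rw [hσ_def]; exact dif_pos hk
  have KEY : ∀ (k : ℕ) (hk : k < M.T) (y : X) (b : A),
      σ k y * q ⟨k, hk⟩ y b = ρ ⟨k, hk⟩ y b := by
    intro k hk y b
    have hσk := hσpos k hk y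
    have hnn : (0:ℝ) ≤ σ k y := by
      rw [hσk]; exact Finset.sum_nonneg fun b' _ => (hmem ⟨k, hk⟩ y b').1
    rcases eq_or_lt_of_le hnn with h0' | hpos
    · have hall : ∀ b', ρ ⟨k, hk⟩ y b' = 0 := by
        have hz : ∑ b' : A, ρ ⟨k, hk⟩ y b' = 0 := by rw [← hσk]; exact h0'.symm
        have := (Finset.sum_eq_zero_iff_of_nonneg
          (fun b' _ => (hmem ⟨k, hk⟩ y b').1)).mp hz
        exact fun b' => this b' (Finset.mem_univ b')
      rw [← h0', zero_mul, hall b]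
    · have hpos' : 0 < ∑ b' : A, ρ ⟨k, hk⟩ y b' := by rw [← hσk]; exact hpos
      have hq' := hp ⟨k, hk⟩ (fun _ => y) (fun _ => Classical.arbitrary A) b hpos'
      simp only [hq_def]
      simp only [hq']
      rw [hσk]
      have hne : (∑ b' : A, ρ ⟨k, hk⟩ y b') ≠ 0 := ne_of_gt hpos'
      field_simp
  -- the central induction: marginal of the trajectory law at time k equals σ k
  have C : ∀ (k : ℕ) (hk : k ≤ M.T) (y : X),
      ∑ τ : Traj M, (if τ.1 ⟨k, Nat.lt_succ_of_le hk⟩ = y then (1:ℝ) else 0) * Sphi M p x0 k τ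
        = (cX * cA) ^ (M.T - k) * σ k y := by
    intro k
    induction k with
    | zero =>
      intro hk y
      have h00 : (⟨0, Nat.lt_succ_of_le hk⟩ : Fin (M.T + 1)) = 0 := by
        apply Fin.ext; simp
      have hs := sumX_aux M 0 (fun _ => (1:ℝ))
        (fun _ v => (if v = y then (1:ℝ) else 0) * (if v = x0 then (1:ℝ) else 0))
        (fun τ v => rfl) (fun τ v w => rfl)
      simp only [one_mul] at hs
      have hv : ∑ v : X, (if v = y then (1:ℝ) else 0) * (if v = x0 then (1:ℝ) else 0)
          = (if y = x0 then (1:ℝ) else 0) := by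
        rw [Finset.sum_eq_single y]
        · simp
        · intro v _ hv; simp [hv]
        · intro h; exact absurd (Finset.mem_univ y) h
      rw [hv] at hs
      have hcard : Fintype.card (Traj M) = Fintype.card X ^ (M.T + 1) * Fintype.card A ^ M.T := by
        rw [Fintype.card_prod, Fintype.card_fun, Fintype.card_fun, Fintype.card_fin,
          Fintype.card_fin]
      have hcount : ∑ _τ : Traj M, (if y = x0 then (1:ℝ) else 0)
          = (cX ^ (M.T + 1) * cA ^ M.T) * (if y = x0 then (1:ℝ) else 0) := by
        rw [Finset.sum_const, Finset.card_univ, nsmul_eq_mul, hcard, hcX_def, hcA_def]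
        push_cast
        ring
      rw [hcount] at hs
      have hσ0 : σ 0 y = (if y = x0 then (1:ℝ) else 0) := by
        rw [hσpos 0 M.hT y]
        exact h0 y
      apply mul_left_cancel₀ (ne_of_gt cXpos)
      rw [hσ0, Nat.sub_zero]
      calc cX * ∑ τ : Traj M,
              (if τ.1 ⟨0, Nat.lt_succ_of_le hk⟩ = y then (1:ℝ) else 0) * Sphi M p x0 0 τ
          = cX * ∑ τ : Traj M,
              (if τ.1 0 = y then (1:ℝ) else 0) * (if τ.1 0 = x0 then (1:ℝ) else 0) := by
            simp only [h00, Sphi_zero]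
        _ = (cX ^ (M.T + 1) * cA ^ M.T) * (if y = x0 then (1:ℝ) else 0) := hs
        _ = cX * ((cX * cA) ^ M.T * (if y = x0 then (1:ℝ) else 0)) := by
            rw [mul_pow]; ring
    | succ k ih =>
      intro hk y
      have hkT : k < M.T := hk
      have pf1 : k + 1 < M.T + 1 := Nat.lt_succ_of_le hk
      have pf0 : k < M.T + 1 := by omega
      have hcs : ((⟨k, hkT⟩ : Fin M.T)).castSucc = (⟨k, pf0⟩ : Fin (M.T + 1)) := rfl
      have hsc : ((⟨k, hkT⟩ : Fin M.T)).succ = (⟨k + 1, pf1⟩ : Fin (M.T + 1)) := rfl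
      -- flow identity rewritten for σ
      have hσsucc : ∑ z : X, ∑ b : A, ρ ⟨k, hkT⟩ z b * M.P z b y = σ (k + 1) y := by
        by_cases hk1 : k + 1 < M.T
        · rw [hσpos (k + 1) hk1 y]
          have hf := hflow ⟨k + 1, hk1⟩ (Nat.succ_le_succ (Nat.zero_le k)) y
          rw [hf]
          exact Finset.sum_congr rfl fun z _ => Finset.sum_congr rfl fun b _ =>
            mul_comm _ _
        · have hσN : σ (k + 1) y = ρT y := by rw [hσ_def]; exact dif_neg hk1
          rw [hσN, hfinal y]
          refine Finset.sum_congr rfl fun z _ => Finset.sum_congr rfl fun b _ => ?_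
          rw [show (⟨M.T - 1, by omega⟩ : Fin M.T) = ⟨k, hkT⟩ from Fin.ext (by simp; omega)]
          exact mul_comm _ _
      -- the two sum-out identities
      have hA1 := sumX_aux M ⟨k + 1, pf1⟩
        (fun τ => Sphi M p x0 k τ * p.π ⟨k, hkT⟩ (histStates τ ⟨k, hkT⟩)
          (histActs τ ⟨k, hkT⟩) (τ.2 ⟨k, hkT⟩))
        (fun τ v => (if v = y then (1:ℝ) else 0) * M.P (τ.1 ⟨k, pf0⟩) (τ.2 ⟨k, hkT⟩) v)
        (fun τ v => by
          dsimp only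
          rw [Sphi_update_state M p x0 k ⟨k + 1, pf1⟩ (Nat.lt_succ_self k) τ v,
            histStates_update_state τ ⟨k, hkT⟩ ⟨k + 1, pf1⟩ (Nat.lt_succ_self k) v,
            histActs_update_state τ ⟨k, hkT⟩ ⟨k + 1, pf1⟩ v])
        (fun τ v w => by
          dsimp only
          rw [Function.update_of_ne (Fin.ne_of_val_ne (Nat.ne_of_lt (Nat.lt_succ_self k)))
            v τ.1])
      have hA2 := sumA_aux M ⟨k, hkT⟩
        (fun τ => Sphi M p x0 k τ)
        (fun τ b => q ⟨k, hkT⟩ (τ.1 ⟨k, pf0⟩) b * M.P (τ.1 ⟨k, pf0⟩) b y)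
        (fun τ b => Sphi_update_act M p x0 k ⟨k, hkT⟩ (le_refl k) τ b)
        (fun τ b c => rfl)
      show ∑ τ : Traj M, (if τ.1 ⟨k + 1, pf1⟩ = y then (1:ℝ) else 0) * Sphi M p x0 (k + 1) τ
        = (cX * cA) ^ (M.T - (k + 1)) * σ (k + 1) y
      apply mul_left_cancel₀ (show cA * cX ≠ 0 from ne_of_gt (mul_pos cApos cXpos))
      calc cA * cX * ∑ τ : Traj M,
              (if τ.1 ⟨k + 1, pf1⟩ = y then (1:ℝ) else 0) * Sphi M p x0 (k + 1) τ
          = cA * (cX * ∑ τ : Traj M,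
              (Sphi M p x0 k τ * p.π ⟨k, hkT⟩ (histStates τ ⟨k, hkT⟩)
                (histActs τ ⟨k, hkT⟩) (τ.2 ⟨k, hkT⟩)) *
              ((if τ.1 ⟨k + 1, pf1⟩ = y then (1:ℝ) else 0) *
                M.P (τ.1 ⟨k, pf0⟩) (τ.2 ⟨k, hkT⟩) (τ.1 ⟨k + 1, pf1⟩))) := by
            rw [mul_assoc]
            congr 2
            refine Finset.sum_congr rfl fun τ _ => ?_
            rw [Sphi_succ M p x0 k hkT τ, hcs, hsc]
            ring
        _ = cA * ∑ τ : Traj M,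
              (Sphi M p x0 k τ * p.π ⟨k, hkT⟩ (histStates τ ⟨k, hkT⟩)
                (histActs τ ⟨k, hkT⟩) (τ.2 ⟨k, hkT⟩)) *
              (∑ v : X, (if v = y then (1:ℝ) else 0) * M.P (τ.1 ⟨k, pf0⟩) (τ.2 ⟨k, hkT⟩) v) := by
            rw [hA1]
        _ = cA * ∑ τ : Traj M,
              Sphi M p x0 k τ *
                (q ⟨k, hkT⟩ (τ.1 ⟨k, pf0⟩) (τ.2 ⟨k, hkT⟩) *
                  M.P (τ.1 ⟨k, pf0⟩) (τ.2 ⟨k, hkT⟩) y) := by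
            congr 1
            refine Finset.sum_congr rfl fun τ _ => ?_
            rw [hq τ ⟨k, hkT⟩, hcs]
            have : ∑ v : X, (if v = y then (1:ℝ) else 0) * M.P (τ.1 ⟨k, pf0⟩) (τ.2 ⟨k, hkT⟩) v
                = M.P (τ.1 ⟨k, pf0⟩) (τ.2 ⟨k, hkT⟩) y := by
              simp [ite_mul, Finset.sum_ite_eq']
            rw [this]
            ring
        _ = ∑ τ : Traj M,
              Sphi M p x0 k τ *
                (∑ b : A, q ⟨k, hkT⟩ (τ.1 ⟨k, pf0⟩) b * M.P (τ.1 ⟨k, pf0⟩) b y) := hA2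
        _ = ∑ z : X, (∑ τ : Traj M, (if τ.1 ⟨k, pf0⟩ = z then (1:ℝ) else 0) * Sphi M p x0 k τ)
              * (∑ b : A, q ⟨k, hkT⟩ z b * M.P z b y) := by
            calc ∑ τ : Traj M, Sphi M p x0 k τ *
                    (∑ b : A, q ⟨k, hkT⟩ (τ.1 ⟨k, pf0⟩) b * M.P (τ.1 ⟨k, pf0⟩) b y)
                = ∑ τ : Traj M, ∑ z : X,
                    ((if τ.1 ⟨k, pf0⟩ = z then (1:ℝ) else 0) * Sphi M p x0 k τ) *
                      (∑ b : A, q ⟨k, hkT⟩ z b * M.P z b y) := by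
                  refine Finset.sum_congr rfl fun τ _ => ?_
                  symm
                  simp only [ite_mul, one_mul, zero_mul, Finset.sum_ite_eq,
                    Finset.mem_univ, if_true]
              _ = ∑ z : X, ∑ τ : Traj M,
                    ((if τ.1 ⟨k, pf0⟩ = z then (1:ℝ) else 0) * Sphi M p x0 k τ) *
                      (∑ b : A, q ⟨k, hkT⟩ z b * M.P z b y) := Finset.sum_comm
              _ = ∑ z : X, (∑ τ : Traj M, (if τ.1 ⟨k, pf0⟩ = z then (1:ℝ) else 0)
                    * Sphi M p x0 k τ) * (∑ b : A, q ⟨k, hkT⟩ z b * M.P z b y) :=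
                  Finset.sum_congr rfl fun z _ => (Finset.sum_mul _ _ _).symm
        _ = ∑ z : X, ((cX * cA) ^ (M.T - k) * σ k z) * (∑ b : A, q ⟨k, hkT⟩ z b * M.P z b y) :=
            Finset.sum_congr rfl fun z _ => by
              exact congrArg (fun r => r * (∑ b : A, q ⟨k, hkT⟩ z b * M.P z b y))
                (ih (le_of_lt hkT) z)
        _ = (cX * cA) ^ (M.T - k) * ∑ z : X, ∑ b : A, ρ ⟨k, hkT⟩ z b * M.P z b y := by
            rw [Finset.mul_sum]
            refine Finset.sum_congr rfl fun z _ => ?_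
            rw [mul_assoc]
            congr 1
            rw [Finset.mul_sum]
            refine Finset.sum_congr rfl fun b _ => ?_
            rw [← mul_assoc, KEY k hkT z b]
        _ = (cX * cA) ^ (M.T - k) * σ (k + 1) y := by rw [hσsucc]
        _ = cA * cX * ((cX * cA) ^ (M.T - (k + 1)) * σ (k + 1) y) := by
            rw [show M.T - k = (M.T - (k + 1)) + 1 from by omega, pow_succ]
            ring
  have probEvent_eq : ∀ E : Traj M → Prop, probEvent M p x0 E
      = ∑ τ : Traj M, (if E τ then (1:ℝ) else 0) * Sphi M p x0 M.T τ := by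
    intro E
    unfold probEvent
    refine Finset.sum_congr rfl fun τ _ => ?_
    rw [Sphi_top]
    split_ifs <;> simp
  have hoccT : ∀ x : X, occT M p x0 x = ρT x := by
    intro x
    have hC := C M.T le_rfl x
    rw [Nat.sub_self, pow_zero, one_mul] at hC
    have hσT : σ M.T x = ρT x := by rw [hσ_def]; exact dif_neg (lt_irrefl M.T)
    rw [← hσT, ← hC]
    unfold occT
    rw [probEvent_eq]
    rfl
  have hocc : ∀ (t : Fin M.T) (x : X) (a : A), occ M p x0 t x a = ρ t x a := by
    intro t x a
    set G : Traj M → ℝ := fun τ => if τ.1 t.castSucc = x ∧ τ.2 t = a then (1:ℝ) else 0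
      with hG_def
    set D : ℕ → ℝ := fun j => ∑ τ : Traj M, G τ * Sphi M p x0 j τ with hD_def
    have RED : ∀ (j : ℕ) (hj : j < M.T), t.val < j → cA * (cX * D (j + 1)) = D j := by
      intro j hj htj
      have pfj1 : j + 1 < M.T + 1 := Nat.succ_lt_succ hj
      have pfj0 : j < M.T + 1 := by omega
      have hcsj : ((⟨j, hj⟩ : Fin M.T)).castSucc = (⟨j, pfj0⟩ : Fin (M.T + 1)) := rfl
      have hscj : ((⟨j, hj⟩ : Fin M.T)).succ = (⟨j + 1, pfj1⟩ : Fin (M.T + 1)) := rfl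
      have hA1 := sumX_aux M ⟨j + 1, pfj1⟩
        (fun τ => G τ * Sphi M p x0 j τ * p.π ⟨j, hj⟩ (histStates τ ⟨j, hj⟩)
          (histActs τ ⟨j, hj⟩) (τ.2 ⟨j, hj⟩))
        (fun τ v => M.P (τ.1 ⟨j, pfj0⟩) (τ.2 ⟨j, hj⟩) v)
        (fun τ v => by
          simp only [hG_def]
          simp only [Sphi_update_state M p x0 j ⟨j + 1, pfj1⟩ (Nat.lt_succ_self j) τ v,
            histStates_update_state τ ⟨j, hj⟩ ⟨j + 1, pfj1⟩ (Nat.lt_succ_self j) v,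
            histActs_update_state τ ⟨j, hj⟩ ⟨j + 1, pfj1⟩ v,
            Function.update_of_ne (Fin.ne_of_val_ne
              (show (t.castSucc).val ≠ (⟨j + 1, pfj1⟩ : Fin (M.T + 1)).val from
                Nat.ne_of_lt (Nat.lt_succ_of_lt htj))) v τ.1])
        (fun τ v w => by
          dsimp only
          rw [Function.update_of_ne (Fin.ne_of_val_ne
            (show ((⟨j, pfj0⟩ : Fin (M.T + 1))).val ≠ (⟨j + 1, pfj1⟩ : Fin (M.T + 1)).val from
              Nat.ne_of_lt (Nat.lt_succ_self j))) v τ.1])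
      have hA2 := sumA_aux M ⟨j, hj⟩
        (fun τ => G τ * Sphi M p x0 j τ)
        (fun τ b => p.π ⟨j, hj⟩ (histStates τ ⟨j, hj⟩) (histActs τ ⟨j, hj⟩) b)
        (fun τ b => by
          simp only [hG_def]
          simp only [Sphi_update_act M p x0 j ⟨j, hj⟩ (le_refl j) τ b,
            Function.update_of_ne (show t ≠ ⟨j, hj⟩ from Fin.ne_of_val_ne
              (Nat.ne_of_lt htj)) b τ.2])
        (fun τ b c => by
          rw [histActs_update_act τ ⟨j, hj⟩ ⟨j, hj⟩ (le_refl j) b,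
            histStates_update_act τ ⟨j, hj⟩ ⟨j, hj⟩ b])
      calc cA * (cX * D (j + 1))
          = cA * (cX * ∑ τ : Traj M,
              (G τ * Sphi M p x0 j τ * p.π ⟨j, hj⟩ (histStates τ ⟨j, hj⟩)
                (histActs τ ⟨j, hj⟩) (τ.2 ⟨j, hj⟩)) *
              M.P (τ.1 ⟨j, pfj0⟩) (τ.2 ⟨j, hj⟩) (τ.1 ⟨j + 1, pfj1⟩)) := by
            simp only [hD_def]
            congr 2
            refine Finset.sum_congr rfl fun τ _ => ?_
            rw [Sphi_succ M p x0 j hj τ, hcsj, hscj]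
            ring
        _ = cA * ∑ τ : Traj M,
              (G τ * Sphi M p x0 j τ * p.π ⟨j, hj⟩ (histStates τ ⟨j, hj⟩)
                (histActs τ ⟨j, hj⟩) (τ.2 ⟨j, hj⟩)) *
              (∑ v : X, M.P (τ.1 ⟨j, pfj0⟩) (τ.2 ⟨j, hj⟩) v) := by rw [hA1]
        _ = cA * ∑ τ : Traj M, (G τ * Sphi M p x0 j τ) *
              p.π ⟨j, hj⟩ (histStates τ ⟨j, hj⟩) (histActs τ ⟨j, hj⟩) (τ.2 ⟨j, hj⟩) := by
            congr 1
            refine Finset.sum_congr rfl fun τ _ => ?_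
            rw [M.P_sum]
            ring
        _ = ∑ τ : Traj M, (G τ * Sphi M p x0 j τ) *
              (∑ b : A, p.π ⟨j, hj⟩ (histStates τ ⟨j, hj⟩) (histActs τ ⟨j, hj⟩) b) := hA2
        _ = D j := by
            simp only [hD_def]
            refine Finset.sum_congr rfl fun τ _ => ?_
            rw [p.sum_one]
            ring
    have chain : ∀ d : ℕ, t.val + 1 + d ≤ M.T →
        (cX * cA) ^ d * D (t.val + 1 + d) = D (t.val + 1) := by
      intro d
      induction d with
      | zero => intro _; simp
      | succ d ihd =>
        intro hle
        have hj : t.val + 1 + d < M.T := by omega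
        have htj : t.val < t.val + 1 + d := by omega
        calc (cX * cA) ^ (d + 1) * D (t.val + 1 + (d + 1))
            = (cX * cA) ^ d * (cA * (cX * D ((t.val + 1 + d) + 1))) := by
              rw [show t.val + 1 + (d + 1) = (t.val + 1 + d) + 1 from rfl, pow_succ]
              ring
          _ = (cX * cA) ^ d * D (t.val + 1 + d) := by rw [RED (t.val + 1 + d) hj htj]
          _ = D (t.val + 1) := ihd (by omega)
    have pft1 : t.val + 1 < M.T + 1 := Nat.succ_lt_succ t.isLt
    have hsct : (t : Fin M.T).succ = (⟨t.val + 1, pft1⟩ : Fin (M.T + 1)) := rfl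
    have hA1 := sumX_aux M ⟨t.val + 1, pft1⟩
      (fun τ => G τ * Sphi M p x0 t.val τ * p.π t (histStates τ t) (histActs τ t) (τ.2 t))
      (fun τ v => M.P (τ.1 t.castSucc) (τ.2 t) v)
      (fun τ v => by
        simp only [hG_def]
        simp only [Sphi_update_state M p x0 t.val ⟨t.val + 1, pft1⟩ (Nat.lt_succ_self t.val) τ v,
          histStates_update_state τ t ⟨t.val + 1, pft1⟩ (Nat.lt_succ_self t.val) v,
          histActs_update_state τ t ⟨t.val + 1, pft1⟩ v,
          Function.update_of_ne (Fin.ne_of_val_ne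
            (show (t.castSucc).val ≠ (⟨t.val + 1, pft1⟩ : Fin (M.T + 1)).val from
              Nat.ne_of_lt (Nat.lt_succ_self t.val))) v τ.1])
      (fun τ v w => by
        dsimp only
        rw [Function.update_of_ne (Fin.ne_of_val_ne
          (show (t.castSucc).val ≠ (⟨t.val + 1, pft1⟩ : Fin (M.T + 1)).val from
            Nat.ne_of_lt (Nat.lt_succ_self t.val))) v τ.1])
    have hA2 := sumA_aux M t
      (fun τ => Sphi M p x0 t.val τ)
      (fun τ b => (if τ.1 t.castSucc = x ∧ b = a then (1:ℝ) else 0) * q t x a)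
      (fun τ b => Sphi_update_act M p x0 t.val t (le_refl t.val) τ b)
      (fun τ b c => rfl)
    have BOUND : cA * (cX * D (t.val + 1)) = (cX * cA) ^ (M.T - t.val) * ρ t x a := by
      calc cA * (cX * D (t.val + 1))
          = cA * (cX * ∑ τ : Traj M,
              (G τ * Sphi M p x0 t.val τ * p.π t (histStates τ t) (histActs τ t) (τ.2 t)) *
              M.P (τ.1 t.castSucc) (τ.2 t) (τ.1 ⟨t.val + 1, pft1⟩)) := by
            simp only [hD_def]
            congr 2
            refine Finset.sum_congr rfl fun τ _ => ?_
            rw [Sphi_succ M p x0 t.val t.isLt τ]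
            simp only [Fin.eta]
            rw [hsct]
            ring
        _ = cA * ∑ τ : Traj M,
              (G τ * Sphi M p x0 t.val τ * p.π t (histStates τ t) (histActs τ t) (τ.2 t)) *
              (∑ v : X, M.P (τ.1 t.castSucc) (τ.2 t) v) := by rw [hA1]
        _ = cA * ∑ τ : Traj M, Sphi M p x0 t.val τ *
              ((if τ.1 t.castSucc = x ∧ τ.2 t = a then (1:ℝ) else 0) * q t x a) := by
            congr 1
            refine Finset.sum_congr rfl fun τ _ => ?_
            rw [M.P_sum, mul_one, hq τ t]
            simp only [hG_def]
            by_cases hc : τ.1 t.castSucc = x ∧ τ.2 t = a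
            · rw [if_pos hc, hc.1, hc.2]
              ring
            · rw [if_neg hc]
              ring
        _ = ∑ τ : Traj M, Sphi M p x0 t.val τ *
              (∑ b : A, (if τ.1 t.castSucc = x ∧ b = a then (1:ℝ) else 0) * q t x a) := hA2
        _ = (∑ τ : Traj M, (if τ.1 t.castSucc = x then (1:ℝ) else 0) * Sphi M p x0 t.val τ)
              * q t x a := by
            rw [Finset.sum_mul]
            refine Finset.sum_congr rfl fun τ _ => ?_
            have hb : ∑ b : A, (if τ.1 t.castSucc = x ∧ b = a then (1:ℝ) else 0) * q t x a
                = (if τ.1 t.castSucc = x then (1:ℝ) else 0) * q t x a := by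
              rw [← Finset.sum_mul]
              congr 1
              by_cases hcx : τ.1 t.castSucc = x
              · simp [hcx, Finset.sum_ite_eq']
              · simp [hcx]
            rw [hb]
            ring
        _ = ((cX * cA) ^ (M.T - t.val) * σ t.val x) * q t x a := by
            exact congrArg (fun r => r * q t x a) (C t.val (le_of_lt t.isLt) x)
        _ = (cX * cA) ^ (M.T - t.val) * ρ t x a := by
            rw [mul_assoc]
            congr 1
            exact KEY t.val t.isLt x a
    have hoccD : occ M p x0 t x a = D M.T := by
      unfold occ
      rw [probEvent_eq]
      simp only [hD_def, hG_def]
      refine Finset.sum_congr rfl fun τ _ => ?_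
      by_cases hc : τ.1 t.castSucc = x ∧ τ.2 t = a <;> simp [hc]
    have hchain := chain (M.T - (t.val + 1)) (by omega)
    rw [show t.val + 1 + (M.T - (t.val + 1)) = M.T from by omega] at hchain
    have hpow : (cX * cA) ^ (M.T - t.val)
        = cA * (cX * (cX * cA) ^ (M.T - (t.val + 1))) := by
      rw [show M.T - t.val = (M.T - (t.val + 1)) + 1 from by omega, pow_succ]
      ring
    apply mul_left_cancel₀ (show (cX * cA) ^ (M.T - t.val) ≠ 0 from
      pow_ne_zero _ (ne_of_gt (mul_pos cXpos cApos)))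
    calc (cX * cA) ^ (M.T - t.val) * occ M p x0 t x a
        = cA * (cX * ((cX * cA) ^ (M.T - (t.val + 1)) * D M.T)) := by
          rw [hoccD, hpow]
          ring
      _ = cA * (cX * D (t.val + 1)) := by rw [hchain]
      _ = (cX * cA) ^ (M.T - t.val) * ρ t x a := BOUND
  exact ⟨hocc, hoccT⟩


end
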